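/- For a positive integer n, let A_n be the (n+1)×(n+1) matrix with entries (A_n)_{jk} = |j − k| for 0 ≤ j, k ≤ n. Then A_n is invertible and its inverse satisfies 2 − π²/(2n²) ≤ ‖A_n^{−1}‖₂ ≤ 2, where ‖·‖₂ denotes the operator norm induced by the Euclidean vector norm. -/

import Mathlib

/-- The Euclidean distance matrix of the points `0, 1, …, n` on the real line. -/
noncomputable def distMat (n : ℕ) : Matrix (Fin (n + 1)) (Fin (n + 1)) ℝ :=
  Matrix.of fun j k => |((j : ℕ) : ℝ) - ((k : ℕ) : ℝ)|


open Finset Real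
open scoped RealInnerProductSpace

noncomputable def bEnt (N k m : ℕ) : ℝ :=
  (if m = k + 1 then 1/2 else 0) + (if k = m + 1 then 1/2 else 0)
  + (if k = m then -1 else 0)
  + (if k = m ∧ (k = 0 ∨ k = N) then 1/2 else 0)
  + (if (k = 0 ∨ k = N) ∧ (m = 0 ∨ m = N) then 1/(2*(N:ℝ)) else 0)

lemma bEnt_symm (N k m : ℕ) : bEnt N k m = bEnt N m k := by
  unfold bEnt
  have h3 : (if k = m then (-1:ℝ) else 0) = (if m = k then (-1:ℝ) else 0) := by
    refine if_congr eq_comm rfl rfl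
  have h4 : (if k = m ∧ (k = 0 ∨ k = N) then (1/2:ℝ) else 0)
      = (if m = k ∧ (m = 0 ∨ m = N) then (1/2:ℝ) else 0) := by
    refine if_congr ?_ rfl rfl
    constructor <;> rintro ⟨rfl, h⟩ <;> exact ⟨rfl, h⟩
  have h5 : (if (k = 0 ∨ k = N) ∧ (m = 0 ∨ m = N) then 1/(2*(N:ℝ)) else 0)
      = (if (m = 0 ∨ m = N) ∧ (k = 0 ∨ k = N) then 1/(2*(N:ℝ)) else 0) := by
    refine if_congr and_comm rfl rfl
  rw [h3, h4, h5]; ring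

lemma sum_ite_half (N c : ℕ) (g : ℕ → ℝ) (v : ℝ) :
    ∑ m ∈ range (N + 1), (if m = c then v else 0) * g m
      = if c ≤ N then v * g c else 0 := by
  rw [Finset.sum_congr rfl (fun m _ => ?_)]
  · rw [Finset.sum_ite_eq' (range (N+1)) c (fun m => v * g m)]
    simp [Nat.lt_succ_iff]
  · split_ifs <;> simp [*]

lemma bEnt_row (N k : ℕ) (hN : 0 < N) (hk : k ≤ N) (g : ℕ → ℝ) :
    ∑ m ∈ range (N + 1), bEnt N k m * g m =
      (if k + 1 ≤ N then g (k+1)/2 else 0)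
      + (if k = 0 then 0 else g (k-1)/2)
      - g k
      + (if k = 0 ∨ k = N then g k / 2 + (g 0 + g N)/(2*(N:ℝ)) else 0) := by
  unfold bEnt
  simp only [add_mul]
  rw [Finset.sum_add_distrib, Finset.sum_add_distrib, Finset.sum_add_distrib,
    Finset.sum_add_distrib]
  have S1 : ∑ m ∈ range (N+1), (if m = k + 1 then (1/2:ℝ) else 0) * g m
      = if k + 1 ≤ N then g (k+1)/2 else 0 := by
    rw [sum_ite_half]; split_ifs <;> ring
  have S2 : ∑ m ∈ range (N+1), (if k = m + 1 then (1/2:ℝ) else 0) * g m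
      = if k = 0 then 0 else g (k-1)/2 := by
    cases k with
    | zero => simp
    | succ j =>
        have : ∀ m, (if j + 1 = m + 1 then (1/2:ℝ) else 0) = (if m = j then (1/2:ℝ) else 0) := by
          intro m; refine if_congr ?_ rfl rfl; omega
        simp only [this]
        rw [sum_ite_half]
        have hj : j ≤ N := by omega
        simp [hj]; ring
  have S3 : ∑ m ∈ range (N+1), (if k = m then (-1:ℝ) else 0) * g m = -g k := by
    have : ∀ m, (if k = m then (-1:ℝ) else 0) = (if m = k then (-1:ℝ) else 0) := by
      intro m; refine if_congr eq_comm rfl rfl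
    simp only [this]; rw [sum_ite_half]; simp [hk]
  have S4 : ∑ m ∈ range (N+1), (if k = m ∧ (k = 0 ∨ k = N) then (1/2:ℝ) else 0) * g m
      = if k = 0 ∨ k = N then g k / 2 else 0 := by
    by_cases hP : k = 0 ∨ k = N
    · have : ∀ m, (if k = m ∧ (k = 0 ∨ k = N) then (1/2:ℝ) else 0)
          = (if m = k then (1/2:ℝ) else 0) := by
        intro m; refine if_congr ?_ rfl rfl
        constructor
        · rintro ⟨rfl, _⟩; rfl
        · rintro rfl; exact ⟨rfl, hP⟩
      simp only [this]; rw [sum_ite_half]; simp [hk, hP]; ring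
    · simp only [hP, and_false, if_false, zero_mul, Finset.sum_const_zero]
  have S5 : ∑ m ∈ range (N+1), (if (k = 0 ∨ k = N) ∧ (m = 0 ∨ m = N) then 1/(2*(N:ℝ)) else 0) * g m
      = if k = 0 ∨ k = N then (g 0 + g N)/(2*(N:ℝ)) else 0 := by
    by_cases hP : k = 0 ∨ k = N
    · have : ∀ m, (if (k = 0 ∨ k = N) ∧ (m = 0 ∨ m = N) then 1/(2*(N:ℝ)) else 0)
          = (if m = 0 then 1/(2*(N:ℝ)) else 0) + (if m = N then 1/(2*(N:ℝ)) else 0) := by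
        intro m
        by_cases h0 : m = 0 <;> by_cases hN' : m = N <;> simp_all <;> omega
      simp only [this, add_mul]
      rw [Finset.sum_add_distrib, sum_ite_half, sum_ite_half]
      simp [Nat.zero_le, hN.le, le_refl, hP]
      ring
    · simp only [hP, false_and, if_false, zero_mul, Finset.sum_const_zero]
  rw [S1, S2, S3, S4, S5]
  split_ifs <;> ring

lemma absn_le (a b : ℕ) (h : a ≤ b) : |(a:ℝ) - b| = (b:ℝ) - a := by
  rw [abs_sub_comm]
  exact abs_of_nonneg (sub_nonneg.mpr (Nat.cast_le.mpr h))

lemma absn_ge (a b : ℕ) (h : b ≤ a) : |(a:ℝ) - b| = (a:ℝ) - b :=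
  abs_of_nonneg (sub_nonneg.mpr (Nat.cast_le.mpr h))

lemma prod_entry (N j k : ℕ) (hN : 0 < N) (hj : j ≤ N) (hk : k ≤ N) :
    ∑ m ∈ range (N+1), |(j:ℝ) - m| * bEnt N m k = if j = k then 1 else 0 := by
  have hrw : ∀ m ∈ range (N+1), |(j:ℝ) - m| * bEnt N m k
      = bEnt N k m * |(j:ℝ) - m| := by
    intro m _; rw [bEnt_symm N m k, mul_comm]
  rw [Finset.sum_congr rfl hrw, bEnt_row N k hN hk (fun m => |(j:ℝ) - m|)]
  have g0 : |(j:ℝ) - ((0:ℕ):ℝ)| = (j:ℝ) := by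
    rw [absn_ge j 0 (Nat.zero_le j)]; simp
  have gN : |(j:ℝ) - ((N:ℕ):ℝ)| = (N:ℝ) - j := absn_le j N hj
  have hNne : (N:ℝ) ≠ 0 := Nat.cast_ne_zero.mpr hN.ne'
  rcases Nat.eq_zero_or_pos k with rfl | hk1
  · -- k = 0
    rw [if_pos (by omega : 0 + 1 ≤ N), if_pos (rfl : (0:ℕ) = 0),
      if_pos (Or.inl rfl : (0:ℕ) = 0 ∨ (0:ℕ) = N), g0, gN]
    rcases Nat.eq_zero_or_pos j with rfl | hj1
    · rw [if_pos (rfl : (0:ℕ) = 0), absn_le 0 (0+1) (by omega)]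
      push_cast
      field_simp
      ring
    · rw [if_neg (by omega : ¬ j = 0), absn_ge j (0+1) (by omega)]
      push_cast
      field_simp
      ring
  · rcases Nat.lt_or_ge k N with hkN | hkN
    · -- interior: 0 < k < N
      have h1 : k + 1 ≤ N := hkN
      have hk0 : ¬ k = 0 := hk1.ne'
      have hkN2 : ¬ (k = 0 ∨ k = N) := by omega
      rw [if_pos h1, if_neg hk0, if_neg hkN2]
      have hc : ((k - 1 : ℕ) : ℝ) = (k:ℝ) - 1 := by
        rw [Nat.cast_sub hk1]; simp
      rcases Nat.lt_or_ge j k with hjk | hjk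
      · rw [if_neg (by omega : ¬ j = k),
          absn_le j (k+1) (by omega), absn_le j (k-1) (by omega), absn_le j k (by omega), hc]
        push_cast; ring
      · rcases Nat.eq_or_lt_of_le hjk with rfl | hjk2
        · rw [if_pos rfl,
            absn_le k (k+1) (by omega), absn_ge k (k-1) (by omega), absn_ge k k le_rfl, hc]
          push_cast; ring
        · rw [if_neg (by omega : ¬ j = k),
            absn_ge j (k+1) (by omega), absn_ge j (k-1) (by omega), absn_ge j k (by omega), hc]
          push_cast; ring
    · -- k = N
      have hkN2 : k = N := le_antisymm hk hkN
      subst hkN2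
      have h1 : ¬ (k + 1 ≤ k) := by omega
      have hk0 : ¬ k = 0 := hk1.ne'
      rw [if_neg h1, if_neg hk0, if_pos (Or.inr rfl : k = 0 ∨ k = k), g0]
      have gN2 : |(j:ℝ) - ((k:ℕ):ℝ)| = (k:ℝ) - j := absn_le j k hj
      rw [gN2]
      have hc : ((k - 1 : ℕ) : ℝ) = (k:ℝ) - 1 := by
        rw [Nat.cast_sub hk1]; simp
      have hkne : (k:ℝ) ≠ 0 := Nat.cast_ne_zero.mpr hk1.ne'
      rcases Nat.eq_or_lt_of_le hj with rfl | hjk2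
      · rw [if_pos rfl, absn_ge j (j-1) (by omega), hc]
        field_simp; ring
      · rw [if_neg (by omega : ¬ j = k), absn_le j (k-1) (by omega), hc]
        field_simp; ring

noncomputable def BmatM (n : ℕ) : Matrix (Fin (n+1)) (Fin (n+1)) ℝ :=
  Matrix.of fun k m => bEnt n (k : ℕ) (m : ℕ)

lemma distMat_mul_BmatM (n : ℕ) (hn : 0 < n) : distMat n * BmatM n = 1 := by
  ext j k
  rw [Matrix.mul_apply, Matrix.one_apply]
  have hconv : ∑ m : Fin (n+1), distMat n j m * BmatM n m k
      = ∑ m ∈ range (n+1), |((j:ℕ):ℝ) - (m:ℝ)| * bEnt n m (k:ℕ) :=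
    Fin.sum_univ_eq_sum_range (fun m => |((j:ℕ):ℝ) - (m:ℝ)| * bEnt n m (k:ℕ)) (n+1)
  rw [hconv, prod_entry n j k hn (Nat.lt_succ_iff.mp j.isLt) (Nat.lt_succ_iff.mp k.isLt)]
  simp [Fin.val_inj]

lemma diff_sq (N : ℕ) (f : ℕ → ℝ) :
    ∑ i ∈ range N, (f (i+1) - f i)^2
      = 2 * (∑ k ∈ range (N+1), f k^2) - f 0^2 - f N^2 - 2 * ∑ i ∈ range N, f i * f (i+1) := by
  have e1 : ∑ i ∈ range (N+1), f i^2 = (∑ i ∈ range N, f (i+1)^2) + f 0^2 :=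
    Finset.sum_range_succ' (fun i => f i^2) N
  have e2 : ∑ i ∈ range (N+1), f i^2 = (∑ i ∈ range N, f i^2) + f N^2 :=
    Finset.sum_range_succ (fun i => f i^2) N
  have e3 : ∑ i ∈ range N, (f (i+1) - f i)^2
      = (∑ i ∈ range N, f (i+1)^2) + (∑ i ∈ range N, f i^2)
        - 2 * ∑ i ∈ range N, f i * f (i+1) := by
    rw [← Finset.sum_add_distrib, Finset.mul_sum, ← Finset.sum_sub_distrib]
    exact Finset.sum_congr rfl (fun i _ => by ring)
  linarith

lemma quad_identity (N : ℕ) (hN : 0 < N) (f : ℕ → ℝ) :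
    ∑ k ∈ range (N+1), (∑ m ∈ range (N+1), bEnt N k m * f m) * f k
      = (f 0 + f N)^2/(2*(N:ℝ)) - (1/2) * ∑ i ∈ range N, (f (i+1) - f i)^2 := by
  have hrow : ∀ k ∈ range (N+1), (∑ m ∈ range (N+1), bEnt N k m * f m) * f k
      = ((if k + 1 ≤ N then f (k+1)/2 else 0)
      + (if k = 0 then 0 else f (k-1)/2)
      - f k
      + (if k = 0 ∨ k = N then f k / 2 + (f 0 + f N)/(2*(N:ℝ)) else 0)) * f k := by
    intro k hk
    rw [bEnt_row N k hN (Nat.lt_succ_iff.mp (Finset.mem_range.mp hk)) f]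
  rw [Finset.sum_congr rfl hrow]
  simp only [add_mul, sub_mul]
  rw [Finset.sum_add_distrib, Finset.sum_sub_distrib, Finset.sum_add_distrib]
  have S1 : ∑ k ∈ range (N+1), (if k + 1 ≤ N then f (k+1)/2 else 0) * f k
      = (1/2) * ∑ i ∈ range N, f i * f (i+1) := by
    rw [Finset.mul_sum]
    rw [← Finset.sum_subset (Finset.range_subset_range.mpr (Nat.le_succ N))]
    · exact Finset.sum_congr rfl (fun k hk => by
        rw [if_pos (by have := Finset.mem_range.mp hk; omega : k + 1 ≤ N)]
        ring)
    · intro k hk1 hk2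
      have h1 : k < N + 1 := Finset.mem_range.mp hk1
      have h2 : ¬ k < N := fun h => hk2 (Finset.mem_range.mpr h)
      have h3 : k = N := by omega
      subst h3
      rw [if_neg (by omega : ¬ k + 1 ≤ k), zero_mul]
  have S2 : ∑ k ∈ range (N+1), (if k = 0 then 0 else f (k-1)/2) * f k
      = (1/2) * ∑ i ∈ range N, f i * f (i+1) := by
    rw [Finset.sum_range_succ' (fun k => (if k = 0 then (0:ℝ) else f (k-1)/2) * f k) N]
    simp only [Nat.succ_ne_zero, if_false, Nat.add_sub_cancel, if_pos rfl, zero_mul, add_zero,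
      if_true]
    rw [Finset.mul_sum]
    exact Finset.sum_congr rfl (fun i _ => by ring)
  have S3 : ∑ k ∈ range (N+1), f k * f k = ∑ k ∈ range (N+1), f k ^ 2 :=
    Finset.sum_congr rfl (fun k _ => (sq (f k)).symm ▸ by ring)
  have S4 : ∑ k ∈ range (N+1), (if k = 0 ∨ k = N then f k / 2 + (f 0 + f N)/(2*(N:ℝ)) else 0) * f k
      = (f 0 / 2 + (f 0 + f N)/(2*(N:ℝ))) * f 0 + (f N / 2 + (f 0 + f N)/(2*(N:ℝ))) * f N := by
    have split : ∀ k, (if k = 0 ∨ k = N then f k / 2 + (f 0 + f N)/(2*(N:ℝ)) else 0) * f k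
        = (if k = 0 then (f k / 2 + (f 0 + f N)/(2*(N:ℝ))) * f k else 0)
          + (if k = N then (f k / 2 + (f 0 + f N)/(2*(N:ℝ))) * f k else 0) := by
      intro k
      by_cases h0 : k = 0 <;> by_cases hN' : k = N
      · exfalso; omega
      · rw [if_pos (Or.inl h0), if_pos h0, if_neg hN']; ring
      · rw [if_pos (Or.inr hN'), if_neg h0, if_pos hN']; ring
      · rw [if_neg (by tauto), if_neg h0, if_neg hN']; ring
    simp only [split]
    rw [Finset.sum_add_distrib,
      Finset.sum_ite_eq' (range (N+1)) 0 (fun k => (f k / 2 + (f 0 + f N)/(2*(N:ℝ))) * f k),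
      Finset.sum_ite_eq' (range (N+1)) N (fun k => (f k / 2 + (f 0 + f N)/(2*(N:ℝ))) * f k)]
    simp [Finset.mem_range]
  rw [S1, S2, S3, S4, diff_sq]
  ring

lemma quad_abs_le (N : ℕ) (hN : 0 < N) (f : ℕ → ℝ) :
    |∑ k ∈ range (N+1), (∑ m ∈ range (N+1), bEnt N k m * f m) * f k|
      ≤ 2 * ∑ k ∈ range (N+1), f k^2 := by
  rw [quad_identity N hN f]
  set S := ∑ k ∈ range (N+1), f k^2 with hS
  have hSnn : 0 ≤ S := Finset.sum_nonneg fun k _ => sq_nonneg _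
  have hends : f 0^2 + f N^2 ≤ S := by
    have hsub : ({0, N} : Finset ℕ) ⊆ range (N+1) := by
      intro x hx
      simp only [Finset.mem_insert, Finset.mem_singleton] at hx
      rcases hx with rfl | rfl <;> simp [Finset.mem_range] <;> omega
    have h := Finset.sum_le_sum_of_subset_of_nonneg hsub (fun i _ _ => sq_nonneg (f i))
    rwa [Finset.sum_pair (by omega : (0:ℕ) ≠ N)] at h
  have e1 : ∑ i ∈ range N, f (i+1)^2 = S - f 0^2 := by
    rw [hS, Finset.sum_range_succ' (fun i => f i^2) N]; ring
  have e2 : ∑ i ∈ range N, f i^2 = S - f N^2 := by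
    rw [hS, Finset.sum_range_succ (fun i => f i^2) N]; ring
  have hD0 : 0 ≤ ∑ i ∈ range N, (f (i+1) - f i)^2 :=
    Finset.sum_nonneg fun _ _ => sq_nonneg _
  have hDle : ∑ i ∈ range N, (f (i+1) - f i)^2 ≤ 4 * S := by
    have hterm : ∀ i ∈ range N, (f (i+1) - f i)^2 ≤ 2*f (i+1)^2 + 2*f i^2 :=
      fun i _ => by nlinarith [sq_nonneg (f (i+1) + f i)]
    calc ∑ i ∈ range N, (f (i+1) - f i)^2 ≤ ∑ i ∈ range N, (2*f (i+1)^2 + 2*f i^2) :=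
          Finset.sum_le_sum hterm
      _ = 2*(S - f 0^2) + 2*(S - f N^2) := by
          rw [Finset.sum_add_distrib, ← Finset.mul_sum, ← Finset.mul_sum, e1, e2]
      _ ≤ 4*S := by nlinarith [sq_nonneg (f 0), sq_nonneg (f N)]
  have hN1 : (1:ℝ) ≤ (N:ℝ) := by exact_mod_cast hN
  have hcorner : (f 0 + f N)^2/(2*(N:ℝ)) ≤ S := by
    rw [div_le_iff₀ (by positivity)]
    nlinarith [sq_nonneg (f 0 - f N), hends]
  have hcnn : 0 ≤ (f 0 + f N)^2/(2*(N:ℝ)) := by positivity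
  rw [abs_le]
  constructor <;> nlinarith

lemma norm_le_of_quad {E : Type*} [NormedAddCommGroup E] [InnerProductSpace ℝ E]
    (T : E →L[ℝ] E) (hsym : ∀ x y, (inner ℝ (T x) (y) : ℝ) = (inner ℝ (x) (T y) : ℝ)) {C : ℝ} (hC : 0 ≤ C)
    (h : ∀ x, |(inner ℝ (T x) (x) : ℝ)| ≤ C * ‖x‖^2) : ‖T‖ ≤ C := by
  refine T.opNorm_le_bound hC (fun x => ?_)
  by_cases hTx : T x = 0
  · rw [hTx, norm_zero]; positivity
  by_cases hx0 : x = 0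
  · exact absurd (hx0 ▸ map_zero T) hTx
  have hTxn : ‖T x‖ ≠ 0 := norm_ne_zero_iff.mpr hTx
  set y := (‖x‖ / ‖T x‖) • T x with hy
  have hip : (inner ℝ (T x) (y) : ℝ) = ‖x‖ * ‖T x‖ := by
    rw [hy, real_inner_smul_right, real_inner_self_eq_norm_sq]
    field_simp
  have hyn : ‖y‖ = ‖x‖ := by
    rw [hy, norm_smul, Real.norm_eq_abs, abs_div, abs_of_nonneg (norm_nonneg x),
      abs_of_nonneg (norm_nonneg (T x))]
    field_simp
  have pol : (inner ℝ (T (x+y)) (x+y) : ℝ) - (inner ℝ (T (x-y)) (x-y) : ℝ) = 4 * (inner ℝ (T x) (y) : ℝ) := by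
    rw [map_add, map_sub]
    simp only [inner_add_left, inner_add_right, inner_sub_left, inner_sub_right]
    have hsw : (inner ℝ (T y) (x) : ℝ) = (inner ℝ (T x) (y) : ℝ) := by
      rw [hsym y x, real_inner_comm]
    linarith
  have par : ‖x+y‖^2 + ‖x-y‖^2 = 2*(‖x‖^2 + ‖y‖^2) := by
    have hpar := parallelogram_law_with_norm ℝ x y
    nlinarith [hpar]
  have e1 : (inner ℝ (T (x+y)) (x+y) : ℝ) ≤ C * ‖x+y‖^2 := le_trans (le_abs_self _) (h (x+y))
  have e2 : -(inner ℝ (T (x-y)) (x-y) : ℝ) ≤ C * ‖x-y‖^2 := le_trans (neg_le_abs _) (h (x-y))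
  have key : 4 * (‖x‖ * ‖T x‖) ≤ 4 * C * ‖x‖^2 := by
    have h4 : 4 * (inner ℝ (T x) (y) : ℝ) ≤ C * (‖x+y‖^2 + ‖x-y‖^2) := by linarith
    rw [par, hyn] at h4
    rw [← hip]
    linarith
  have hxpos : 0 < ‖x‖ := norm_pos_iff.mpr hx0
  nlinarith [key, hxpos]

noncomputable def extv (n : ℕ) (x : EuclideanSpace ℝ (Fin (n+1))) : ℕ → ℝ :=
  fun m => if h : m < n+1 then x ⟨m, h⟩ else 0

lemma extv_coe (n : ℕ) (x : EuclideanSpace ℝ (Fin (n+1))) (i : Fin (n+1)) :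
    extv n x (i : ℕ) = x i := by
  simp [extv, i.isLt]

lemma inner_quad (n : ℕ) (x : EuclideanSpace ℝ (Fin (n+1))) :
    (inner ℝ ((Matrix.toEuclideanCLM (𝕜:=ℝ) (BmatM n)) x) x : ℝ)
      = ∑ k ∈ range (n+1), (∑ m ∈ range (n+1), bEnt n k m * extv n x m) * extv n x k := by
  rw [show (inner ℝ ((Matrix.toEuclideanCLM (𝕜:=ℝ) (BmatM n)) x) x : ℝ)
      = ∑ i : Fin (n+1), ((Matrix.toEuclideanCLM (𝕜:=ℝ) (BmatM n)) x i) * x i from by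
    simp [PiLp.inner_apply, RCLike.inner_apply, mul_comm]]
  rw [← Fin.sum_univ_eq_sum_range
    (fun k => (∑ m ∈ range (n+1), bEnt n k m * extv n x m) * extv n x k) (n+1)]
  refine Finset.sum_congr rfl (fun i _ => ?_)
  have happ : (Matrix.toEuclideanCLM (𝕜:=ℝ) (BmatM n)) x i
      = ∑ m ∈ range (n+1), bEnt n (i:ℕ) m * extv n x m := by
    rw [show (Matrix.toEuclideanCLM (𝕜:=ℝ) (BmatM n)) x i = ∑ j, BmatM n i j * x j from rfl]
    rw [← Fin.sum_univ_eq_sum_range (fun m => bEnt n (i:ℕ) m * extv n x m) (n+1)]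
    exact Finset.sum_congr rfl (fun j _ => by rw [extv_coe]; rfl)
  rw [happ, extv_coe]

lemma norm_sq_quad (n : ℕ) (x : EuclideanSpace ℝ (Fin (n+1))) :
    ‖x‖^2 = ∑ k ∈ range (n+1), (extv n x k)^2 := by
  rw [← real_inner_self_eq_norm_sq]
  rw [show (inner ℝ x x : ℝ) = ∑ i : Fin (n+1), x i * x i from by
    rw [PiLp.inner_apply]; simp [sq]]
  rw [← Fin.sum_univ_eq_sum_range (fun k => (extv n x k)^2) (n+1)]
  exact Finset.sum_congr rfl (fun i _ => by rw [extv_coe]; ring)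

lemma Bsym_clm (n : ℕ) : ∀ x y : EuclideanSpace ℝ (Fin (n+1)),
    (inner ℝ ((Matrix.toEuclideanCLM (𝕜:=ℝ) (BmatM n)) x) y : ℝ)
      = (inner ℝ x ((Matrix.toEuclideanCLM (𝕜:=ℝ) (BmatM n)) y) : ℝ) := by
  have hsa : IsSelfAdjoint (BmatM n) := by
    show star (BmatM n) = BmatM n
    ext i j
    show star (BmatM n j i) = BmatM n i j
    show star (bEnt n (j:ℕ) (i:ℕ)) = bEnt n (i:ℕ) (j:ℕ)
    rw [star_trivial, bEnt_symm]
  have hT : IsSelfAdjoint (Matrix.toEuclideanCLM (𝕜:=ℝ) (BmatM n)) := by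
    show star _ = _
    rw [← map_star, hsa]
  intro x y
  conv_lhs => rw [← hT]
  rw [ContinuousLinearMap.star_eq_adjoint, ContinuousLinearMap.adjoint_inner_left]

lemma norm_B_le (n : ℕ) (hn : 0 < n) : ‖Matrix.toEuclideanCLM (𝕜:=ℝ) (BmatM n)‖ ≤ 2 :=
  norm_le_of_quad _ (Bsym_clm n) (by norm_num)
    (fun x => by rw [inner_quad, norm_sq_quad]; exact quad_abs_le n hn (extv n x))

section Trig

lemma sin_theta_pos (N : ℕ) (hN : 2 ≤ N) : 0 < Real.sin (π/N) := by
  have hNpos : (0:ℝ) < N := by positivity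
  apply Real.sin_pos_of_pos_of_lt_pi
  · positivity
  · have h2 : (2:ℝ) ≤ N := by exact_mod_cast hN
    rw [div_lt_iff₀ hNpos]
    nlinarith [Real.pi_pos]

lemma two_sin_mul_cos (θ a : ℝ) :
    2 * Real.sin θ * Real.cos (a * θ) = Real.sin (a*θ + θ) - Real.sin (a*θ - θ) := by
  rw [Real.sin_add, Real.sin_sub]; ring

lemma cos_odd_sum (N : ℕ) (hN : 2 ≤ N) :
    ∑ k ∈ range N, Real.cos ((2*(k:ℝ)+1)*(π/N)) = 0 := by
  set θ := π/N with hθ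
  have hNne : (N:ℝ) ≠ 0 := by positivity
  have hs : Real.sin θ ≠ 0 := (sin_theta_pos N hN).ne'
  have key : 2*Real.sin θ * ∑ k ∈ range N, Real.cos ((2*(k:ℝ)+1)*θ)
      = Real.sin (2*((N:ℕ):ℝ)*θ) - Real.sin (2*((0:ℕ):ℝ)*θ) := by
    rw [Finset.mul_sum, ← Finset.sum_range_sub (fun k : ℕ => Real.sin (2*(k:ℝ)*θ)) N]
    refine Finset.sum_congr rfl (fun k _ => ?_)
    rw [two_sin_mul_cos θ (2*(k:ℝ)+1)]
    push_cast
    ring_nf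
  have h2N : 2*((N:ℕ):ℝ)*θ = 2*π := by
    rw [hθ]; field_simp
  rw [h2N] at key
  simp only [Nat.cast_zero, mul_zero, zero_mul, Real.sin_zero, sub_zero] at key
  have h2pi : Real.sin (2*π) = 0 := by
    rw [show (2:ℝ)*π = 0 + 2*π by ring, Real.sin_add_two_pi, Real.sin_zero]
  rw [h2pi] at key
  rcases mul_eq_zero.mp key with h | h
  · exact absurd h (by simp [hs])
  · exact h

lemma cos_even_sum (N : ℕ) (hN : 2 ≤ N) :
    ∑ k ∈ range (N+1), Real.cos (2*(k:ℝ)*(π/N)) = 1 := by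
  set θ := π/N with hθ
  have hNne : (N:ℝ) ≠ 0 := by positivity
  have hs : Real.sin θ ≠ 0 := (sin_theta_pos N hN).ne'
  have key : 2*Real.sin θ * ∑ k ∈ range (N+1), Real.cos (2*(k:ℝ)*θ)
      = Real.sin ((2*(((N+1):ℕ):ℝ)-1)*θ) - Real.sin ((2*((0:ℕ):ℝ)-1)*θ) := by
    rw [Finset.mul_sum, ← Finset.sum_range_sub (fun k : ℕ => Real.sin ((2*(k:ℝ)-1)*θ)) (N+1)]
    refine Finset.sum_congr rfl (fun k _ => ?_)
    rw [two_sin_mul_cos θ (2*(k:ℝ))]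
    push_cast
    ring_nf
  have hA : (2*(((N+1):ℕ):ℝ)-1)*θ = θ + 2*π := by
    push_cast
    rw [hθ]; field_simp; ring
  have hB : Real.sin ((2*((0:ℕ):ℝ)-1)*θ) = -Real.sin θ := by
    norm_num
  rw [hA, hB, Real.sin_add_two_pi] at key
  have key2 : 2*Real.sin θ * ∑ k ∈ range (N+1), Real.cos (2*(k:ℝ)*θ) = 2*Real.sin θ * 1 := by
    rw [key]; ring
  exact mul_left_cancel₀ (by simp [hs]) key2

lemma sin_sq_sum (N : ℕ) (hN : 2 ≤ N) :
    ∑ k ∈ range (N+1), Real.sin ((k:ℝ)*(π/N))^2 = N/2 := by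
  have h : ∀ k ∈ range (N+1), Real.sin ((k:ℝ)*(π/N))^2
      = 1/2 - Real.cos (2*(k:ℝ)*(π/N))/2 := by
    intro k _
    rw [Real.sin_sq_eq_half_sub]
    ring_nf
  rw [Finset.sum_congr rfl h, Finset.sum_sub_distrib, Finset.sum_const, Finset.card_range]
  have := cos_even_sum N hN
  rw [← Finset.sum_div, this]
  push_cast
  ring

end Trig

lemma neg_one_pow_sq (i : ℕ) : ((-1:ℝ)^i)^2 = 1 := by
  rw [← pow_mul, mul_comm, pow_mul]; norm_num

lemma P_sum (N : ℕ) (hN : 2 ≤ N) :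
    ∑ i ∈ range N, ((-1:ℝ)^i * Real.sin ((i:ℝ)*(π/N)))
        * ((-1)^(i+1) * Real.sin (((i+1:ℕ):ℝ)*(π/N)))
      = -((N:ℝ)/2) * Real.cos (π/N) := by
  set θ := π/N with hθ
  have prod : ∀ a b : ℝ, Real.sin a * Real.sin b = (Real.cos (b-a) - Real.cos (b+a))/2 := by
    intro a b; rw [Real.cos_sub, Real.cos_add]; ring
  have hterm : ∀ i ∈ range N, ((-1:ℝ)^i * Real.sin ((i:ℝ)*θ))
        * ((-1)^(i+1) * Real.sin (((i+1:ℕ):ℝ)*θ))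
      = -Real.cos θ/2 + Real.cos ((2*(i:ℝ)+1)*θ)/2 := by
    intro i _
    have e1 : ((-1:ℝ)^i * Real.sin ((i:ℝ)*θ)) * ((-1)^(i+1) * Real.sin (((i+1:ℕ):ℝ)*θ))
        = -(((-1:ℝ)^i)^2) * (Real.sin ((i:ℝ)*θ) * Real.sin ((((i:ℝ)+1))*θ)) := by
      push_cast
      rw [pow_succ]
      ring
    rw [e1, neg_one_pow_sq, prod ((i:ℝ)*θ) (((i:ℝ)+1)*θ)]
    have e2 : ((i:ℝ)+1)*θ - (i:ℝ)*θ = θ := by ring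
    have e3 : ((i:ℝ)+1)*θ + (i:ℝ)*θ = (2*(i:ℝ)+1)*θ := by ring
    rw [e2, e3]
    ring
  rw [Finset.sum_congr rfl hterm, Finset.sum_add_distrib, Finset.sum_const, Finset.card_range,
    ← Finset.sum_div, cos_odd_sum N hN]
  simp
  ring

lemma norm_B_ge (n : ℕ) (hn : 2 ≤ n) :
    2 - π^2/(2*(n:ℝ)^2) ≤ ‖Matrix.toEuclideanCLM (𝕜:=ℝ) (BmatM n)‖ := by
  have hn0 : 0 < n := by omega
  have hNne : (n:ℝ) ≠ 0 := by positivity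
  set θ := π/n with hθ
  set f : ℕ → ℝ := fun k => (-1)^k * Real.sin ((k:ℝ)*θ) with hf
  set x : EuclideanSpace ℝ (Fin (n+1)) := WithLp.toLp 2 (fun i : Fin (n+1) => f (i:ℕ)) with hx
  have hextx : ∀ m ∈ range (n+1), extv n x m = f m := by
    intro m hm
    have hlt : m < n+1 := Finset.mem_range.mp hm
    simp only [extv, dif_pos hlt]; rfl
  have hfsq : ∀ k, f k ^ 2 = Real.sin ((k:ℝ)*θ)^2 := by
    intro k
    rw [hf]
    simp only []
    rw [mul_pow, neg_one_pow_sq, one_mul]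
  have hS : ∑ k ∈ range (n+1), f k ^2 = (n:ℝ)/2 := by
    rw [Finset.sum_congr rfl (fun k _ => hfsq k)]
    exact sin_sq_sum n hn
  have hf0 : f 0 = 0 := by simp [hf]
  have hfn : f n = 0 := by
    have hpi : (n:ℝ)*θ = π := by rw [hθ]; field_simp
    rw [hf]
    simp only []
    rw [hpi, Real.sin_pi, mul_zero]
  have hP : ∑ i ∈ range n, f i * f (i+1) = -((n:ℝ)/2) * Real.cos θ := by
    have := P_sum n hn
    rw [← this]
  have hD : ∑ i ∈ range n, (f (i+1) - f i)^2 = (n:ℝ) * (1 + Real.cos θ) := by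
    rw [diff_sq n f, hS, hP, hf0, hfn]
    ring
  have hQ : (inner ℝ ((Matrix.toEuclideanCLM (𝕜:=ℝ) (BmatM n)) x) x : ℝ)
      = -((n:ℝ)/2) * (1 + Real.cos θ) := by
    rw [inner_quad n x]
    have hsum : ∑ k ∈ range (n+1), (∑ m ∈ range (n+1), bEnt n k m * extv n x m) * extv n x k
        = ∑ k ∈ range (n+1), (∑ m ∈ range (n+1), bEnt n k m * f m) * f k := by
      refine Finset.sum_congr rfl (fun k hk => ?_)
      rw [hextx k hk, Finset.sum_congr rfl (fun m hm => by rw [hextx m hm])]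
    rw [hsum, quad_identity n hn0 f, hD, hf0, hfn]
    ring
  have hxnorm : ‖x‖^2 = (n:ℝ)/2 := by
    rw [norm_sq_quad n x, Finset.sum_congr rfl (fun k hk => by rw [hextx k hk]), hS]
  have hcos1 : -1 ≤ Real.cos θ := Real.neg_one_le_cos θ
  have hb : |(inner ℝ ((Matrix.toEuclideanCLM (𝕜:=ℝ) (BmatM n)) x) x : ℝ)|
      ≤ ‖Matrix.toEuclideanCLM (𝕜:=ℝ) (BmatM n)‖ * ‖x‖^2 := by
    calc |(inner ℝ ((Matrix.toEuclideanCLM (𝕜:=ℝ) (BmatM n)) x) x : ℝ)|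
        ≤ ‖(Matrix.toEuclideanCLM (𝕜:=ℝ) (BmatM n)) x‖ * ‖x‖ := abs_real_inner_le_norm _ _
      _ ≤ (‖Matrix.toEuclideanCLM (𝕜:=ℝ) (BmatM n)‖ * ‖x‖) * ‖x‖ :=
          mul_le_mul_of_nonneg_right ((Matrix.toEuclideanCLM (𝕜:=ℝ) (BmatM n)).le_opNorm x)
            (norm_nonneg x)
      _ = ‖Matrix.toEuclideanCLM (𝕜:=ℝ) (BmatM n)‖ * ‖x‖^2 := by ring
  rw [hQ, hxnorm, abs_of_nonpos (by nlinarith : -((n:ℝ)/2) * (1 + Real.cos θ) ≤ 0)] at hb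
  have hnpos : (0:ℝ) < (n:ℝ)/2 := by positivity
  have hkey : 1 + Real.cos θ ≤ ‖Matrix.toEuclideanCLM (𝕜:=ℝ) (BmatM n)‖ := by
    nlinarith [hb]
  have hcosb : 1 - θ^2/2 ≤ Real.cos θ := Real.one_sub_sq_div_two_le_cos
  have hθsq : θ^2/2 = π^2/(2*(n:ℝ)^2) := by
    rw [hθ]; field_simp
  linarith [hkey, hcosb, hθsq.le, hθsq.ge]

theorem stmt11 (n : ℕ) (hn : 0 < n) :
    IsUnit (distMat n) ∧
      2 - Real.pi ^ 2 / (2 * (n : ℝ) ^ 2) ≤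
        ‖Matrix.toEuclideanCLM (𝕜 := ℝ) ((distMat n)⁻¹)‖ ∧
      ‖Matrix.toEuclideanCLM (𝕜 := ℝ) ((distMat n)⁻¹)‖ ≤ 2 := by
  have hAB : distMat n * BmatM n = 1 := distMat_mul_BmatM n hn
  have hBA : BmatM n * distMat n = 1 := mul_eq_one_comm.mp hAB
  have hinv : (distMat n)⁻¹ = BmatM n := Matrix.inv_eq_right_inv hAB
  have hunit : IsUnit (distMat n) := by
    have : Invertible (distMat n) := ⟨BmatM n, hBA, hAB⟩
    exact isUnit_of_invertible _
  refine ⟨hunit, ?_, ?_⟩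
  · rw [hinv]
    rcases Nat.lt_or_ge n 2 with h2 | h2
    · have hn1 : n = 1 := by omega
      subst hn1
      have hpi := Real.pi_gt_three
      have hnn : (0:ℝ) ≤ ‖Matrix.toEuclideanCLM (𝕜 := ℝ) (BmatM 1)‖ := norm_nonneg _
      push_cast
      nlinarith
    · exact norm_B_ge n h2
  · rw [hinv]; exact norm_B_le n hn
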